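/- arXiv:2508.04137 — 6 statements merged into one kernel-verified Lean document; each statement's English description precedes it below -/
import Mathlib

section
/- Let n ≥ 3 be an odd integer. Then the Cartesian product C_n □ C_n is isomorphic to the Kronecker product C_n ⊗ C_n. -/
open SimpleGraph

/-- The cycle graph `C_n` on `ℤ/nℤ`: `i` adjacent to `j` iff `i - j ≡ ±1 (mod n)`. -/
def cycleG (n : ℕ) : SimpleGraph (ZMod n) where
  Adj i j := i ≠ j ∧ (i - j = 1 ∨ j - i = 1)
  symm := ⟨fun _ _ h => ⟨h.1.symm, h.2.symm⟩⟩
  loopless := ⟨fun _ h => h.1 rfl⟩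

/-- Cartesian product of graphs. -/
def cartProd {α β : Type*} (G : SimpleGraph α) (H : SimpleGraph β) : SimpleGraph (α × β) where
  Adj p q := (G.Adj p.1 q.1 ∧ p.2 = q.2) ∨ (p.1 = q.1 ∧ H.Adj p.2 q.2)
  symm := ⟨fun _ _ h => h.imp (fun h => ⟨h.1.symm, h.2.symm⟩) (fun h => ⟨h.1.symm, h.2.symm⟩)⟩
  loopless := ⟨fun _ h => h.elim (fun h => G.loopless.irrefl _ h.1) (fun h => H.loopless.irrefl _ h.2)⟩

/-- Kronecker (tensor/direct) product of graphs. -/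
def tensorProd {α β : Type*} (G : SimpleGraph α) (H : SimpleGraph β) : SimpleGraph (α × β) where
  Adj p q := G.Adj p.1 q.1 ∧ H.Adj p.2 q.2
  symm := ⟨fun _ _ h => ⟨h.1.symm, h.2.symm⟩⟩
  loopless := ⟨fun _ h => G.loopless.irrefl _ h.1⟩

/-- Strong product of graphs. -/
def strongProd {α β : Type*} (G : SimpleGraph α) (H : SimpleGraph β) : SimpleGraph (α × β) where
  Adj p q := (G.Adj p.1 q.1 ∧ p.2 = q.2) ∨ (p.1 = q.1 ∧ H.Adj p.2 q.2) ∨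
    (G.Adj p.1 q.1 ∧ H.Adj p.2 q.2)
  symm := ⟨fun _ _ h => h.imp (fun h => ⟨h.1.symm, h.2.symm⟩)
    (fun h => h.imp (fun h => ⟨h.1.symm, h.2.symm⟩) (fun h => ⟨h.1.symm, h.2.symm⟩))⟩
  loopless := ⟨fun _ h => h.elim (fun h => G.loopless.irrefl _ h.1)
    (fun h => h.elim (fun h => H.loopless.irrefl _ h.2) (fun h => G.loopless.irrefl _ h.1))⟩

/-- Lexicographic product of graphs. -/
def lexProd {α β : Type*} (G : SimpleGraph α) (H : SimpleGraph β) : SimpleGraph (α × β) where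
  Adj p q := G.Adj p.1 q.1 ∨ (p.1 = q.1 ∧ H.Adj p.2 q.2)
  symm := ⟨fun _ _ h => h.imp (fun h => h.symm) (fun h => ⟨h.1.symm, h.2.symm⟩)⟩
  loopless := ⟨fun _ h => h.elim (fun h => G.loopless.irrefl _ h) (fun h => H.loopless.irrefl _ h.2)⟩

theorem stmt_1 (n : ℕ) (hn : 3 ≤ n) (hodd : Odd n) :
    Nonempty (cartProd (cycleG n) (cycleG n) ≃g tensorProd (cycleG n) (cycleG n)) := by
  haveI : NeZero n := ⟨by omega⟩
  haveI : Fact (1 < n) := ⟨by omega⟩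
  have h2 : IsUnit (2 : ZMod n) := by
    have hc : Nat.Coprime 2 n := Nat.coprime_two_left.mpr hodd
    have := (ZMod.isUnit_iff_coprime 2 n).mpr hc
    simpa using this
  obtain ⟨u, hu⟩ := h2
  have hinv : (↑u⁻¹ : ZMod n) * 2 = 1 := by rw [← hu]; exact u.inv_mul
  have cancel : ∀ a b : ZMod n, 2 * a = 2 * b → a = b := by
    intro a b h
    have h' := congrArg (fun z => (↑u⁻¹ : ZMod n) * z) h
    simpa [← mul_assoc, hinv] using h'
  have h10 : (1 : ZMod n) ≠ 0 := one_ne_zero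
  have ne_of : ∀ a b : ZMod n, a - b = 1 ∨ b - a = 1 → a ≠ b := by
    rintro a b (h | h) rfl <;> rw [sub_self] at h <;> exact h10 h.symm
  refine ⟨{ toFun := fun p => (p.1 + p.2, p.1 - p.2),
            invFun := fun p => (↑u⁻¹ * (p.1 + p.2), ↑u⁻¹ * (p.1 - p.2)),
            left_inv := ?_, right_inv := ?_, map_rel_iff' := ?_ }⟩
  · rintro ⟨x, y⟩
    have e1 : (x + y) + (x - y) = 2 * x := by ring
    have e2 : (x + y) - (x - y) = 2 * y := by ring
    simp only [e1, e2, ← mul_assoc, hinv, one_mul]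
  · rintro ⟨x, y⟩
    have e1 : (↑u⁻¹ : ZMod n) * (x + y) + ↑u⁻¹ * (x - y) = ↑u⁻¹ * 2 * x := by ring
    have e2 : (↑u⁻¹ : ZMod n) * (x + y) - ↑u⁻¹ * (x - y) = ↑u⁻¹ * 2 * y := by ring
    simp only [e1, e2, hinv, one_mul]
  · rintro ⟨x, y⟩ ⟨x', y'⟩
    simp only [Equiv.coe_fn_mk, cartProd, tensorProd, cycleG]
    constructor
    · rintro ⟨⟨-, h1⟩, ⟨-, h2'⟩⟩
      rcases h1 with h1 | h1 <;> rcases h2' with h2' | h2'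
      · -- x - x' = 1, y = y'
        have hx : x - x' = 1 := cancel _ _ (by linear_combination h1 + h2')
        have hy : y = y' := by
          have : y - y' = 0 := cancel _ _ (by linear_combination h1 - h2')
          linear_combination this
        exact Or.inl ⟨⟨ne_of x x' (Or.inl hx), Or.inl hx⟩, hy⟩
      · -- x = x', y - y' = 1
        have hy : y - y' = 1 := cancel _ _ (by linear_combination h1 + h2')
        have hx : x = x' := by
          have : x - x' = 0 := cancel _ _ (by linear_combination h1 - h2')
          linear_combination this
        exact Or.inr ⟨hx, ne_of y y' (Or.inl hy), Or.inl hy⟩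
      · -- x = x', y' - y = 1
        have hy : y' - y = 1 := cancel _ _ (by linear_combination h1 + h2')
        have hx : x = x' := by
          have : x - x' = 0 := cancel _ _ (by linear_combination h2' - h1)
          linear_combination this
        exact Or.inr ⟨hx, ne_of y y' (Or.inr hy), Or.inr hy⟩
      · -- x' - x = 1, y = y'
        have hx : x' - x = 1 := cancel _ _ (by linear_combination h1 + h2')
        have hy : y = y' := by
          have : y - y' = 0 := cancel _ _ (by linear_combination h2' - h1)
          linear_combination this
        exact Or.inl ⟨⟨ne_of x x' (Or.inr hx), Or.inr hx⟩, hy⟩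
    · rintro (⟨⟨-, h1 | h1⟩, rfl⟩ | ⟨rfl, -, h1 | h1⟩)
      · exact ⟨⟨ne_of _ _ (Or.inl (by linear_combination h1)), Or.inl (by linear_combination h1)⟩,
          ⟨ne_of _ _ (Or.inl (by linear_combination h1)), Or.inl (by linear_combination h1)⟩⟩
      · exact ⟨⟨ne_of _ _ (Or.inr (by linear_combination h1)), Or.inr (by linear_combination h1)⟩,
          ⟨ne_of _ _ (Or.inr (by linear_combination h1)), Or.inr (by linear_combination h1)⟩⟩
      · exact ⟨⟨ne_of _ _ (Or.inl (by linear_combination h1)), Or.inl (by linear_combination h1)⟩,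
          ⟨ne_of _ _ (Or.inr (by linear_combination h1)), Or.inr (by linear_combination h1)⟩⟩
      · exact ⟨⟨ne_of _ _ (Or.inr (by linear_combination h1)), Or.inr (by linear_combination h1)⟩,
          ⟨ne_of _ _ (Or.inl (by linear_combination h1)), Or.inl (by linear_combination h1)⟩⟩
end

section
/- Let n ≥ 3 be an odd integer and regard the vertices of the cycle C_n as elements of ℤ/nℤ. The bijection f_n(l, m) = (l + m − 1, 1 − l + m) (arithmetic in ℤ/nℤ) maps edges of C_n □ C_n to edges of C_n ⊗ C_n: if (l,m) and (i,j) are adjacent in C_n □ C_n, then f_n(l,m) and f_n(i,j) are adjacent in C_n ⊗ C_n. -/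
open SimpleGraph

theorem stmt_3 (n : ℕ) (hn : 3 ≤ n) (hodd : Odd n) (l m i j : ZMod n)
    (h : (cartProd (cycleG n) (cycleG n)).Adj (l, m) (i, j)) :
    (tensorProd (cycleG n) (cycleG n)).Adj (l + m - 1, 1 - l + m) (i + j - 1, 1 - i + j) := by
  haveI : Fact (1 < n) := ⟨by omega⟩
  have key : ∀ a b : ZMod n, (a - b = 1 ∨ b - a = 1) → (cycleG n).Adj a b := by
    intro a b hab
    refine ⟨?_, hab⟩
    rintro rfl
    rcases hab with hab | hab <;> rw [sub_self] at hab <;> exact zero_ne_one hab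
  rcases h with ⟨⟨hne, hd⟩, hm⟩ | ⟨hl, hne, hd⟩
  · simp only at hd hm hne
    subst hm
    exact ⟨key _ _ (hd.imp (fun h => by linear_combination h) (fun h => by linear_combination h)),
      key _ _ (hd.symm.imp (fun h => by linear_combination h) (fun h => by linear_combination h))⟩
  · simp only at hd hl hne
    subst hl
    exact ⟨key _ _ (hd.imp (fun h => by linear_combination h) (fun h => by linear_combination h)),
      key _ _ (hd.imp (fun h => by linear_combination h) (fun h => by linear_combination h))⟩
end

section
/- Let G and H be finite simple connected graphs, each with at least two vertices. If the minimum degree δ(G) of G is not equal to 2, or the maximum degree Δ(G) of G is not equal to 2, then the Cartesian product G □ H and the Kronecker product G ⊗ H are not isomorphic. (In particular, if at least one of G and H is not a cycle, the two products are not isomorphic.) -/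
open SimpleGraph

section Aux

open Finset

variable {α β : Type} [Fintype α] [Fintype β]

/-- Isomorphic graphs have equal degrees at corresponding vertices. -/
lemma iso_degree_eq {G : SimpleGraph α} {H : SimpleGraph β} [DecidableRel G.Adj]
    [DecidableRel H.Adj] (f : G ≃g H) (v : α) : G.degree v = H.degree (f v) := by
  rw [← card_neighborSet_eq_degree, ← card_neighborSet_eq_degree]
  exact Fintype.card_congr (f.mapNeighborSet v)

lemma cart_degree (G : SimpleGraph α) (H : SimpleGraph β) [DecidableRel G.Adj]
    [DecidableRel H.Adj] [DecidableRel (cartProd G H).Adj] (x : α) (y : β) :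
    (cartProd G H).degree (x, y) = G.degree x + H.degree y := by
  classical
  have hset : (cartProd G H).neighborFinset (x, y) =
      (G.neighborFinset x ×ˢ {y}) ∪ ({x} ×ˢ H.neighborFinset y) := by
    ext ⟨a, b⟩
    simp only [mem_neighborFinset, mem_union, Finset.mem_product, Finset.mem_singleton]
    change ((G.Adj x a ∧ y = b) ∨ (x = a ∧ H.Adj y b)) ↔ _
    constructor
    · rintro (⟨h1, h2⟩ | ⟨h1, h2⟩)
      · exact Or.inl ⟨h1, h2.symm⟩
      · exact Or.inr ⟨h1.symm, h2⟩
    · rintro (⟨h1, h2⟩ | ⟨h1, h2⟩)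
      · exact Or.inl ⟨h1, h2.symm⟩
      · exact Or.inr ⟨h1.symm, h2⟩
  have hdisj : Disjoint (G.neighborFinset x ×ˢ ({y} : Finset β))
      (({x} : Finset α) ×ˢ H.neighborFinset y) := by
    rw [Finset.disjoint_left]
    rintro ⟨a, b⟩ h1 h2
    simp only [Finset.mem_product, Finset.mem_singleton, mem_neighborFinset] at h1 h2
    exact G.loopless.irrefl x (h2.1 ▸ h1.1)
  rw [SimpleGraph.degree, hset, Finset.card_union_of_disjoint hdisj, Finset.card_product,
    Finset.card_product]
  simp only [Finset.card_singleton, mul_one, one_mul]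
  rfl

lemma tensor_degree (G : SimpleGraph α) (H : SimpleGraph β) [DecidableRel G.Adj]
    [DecidableRel H.Adj] [DecidableRel (tensorProd G H).Adj] (x : α) (y : β) :
    (tensorProd G H).degree (x, y) = G.degree x * H.degree y := by
  classical
  have hset : (tensorProd G H).neighborFinset (x, y) =
      G.neighborFinset x ×ˢ H.neighborFinset y := by
    ext ⟨a, b⟩
    simp only [mem_neighborFinset, Finset.mem_product]
    exact Iff.rfl
  rw [SimpleGraph.degree, hset, Finset.card_product]
  rfl

lemma degree_pos_of_connected {G : SimpleGraph α} [DecidableRel G.Adj] [Nontrivial α]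
    (hG : G.Connected) (v : α) : 0 < G.degree v := by
  obtain ⟨w, hw⟩ := exists_ne v
  have hr : G.Reachable v w := hG v w
  obtain ⟨p⟩ := hr
  have hnil : ¬ p.Nil := SimpleGraph.Walk.not_nil_of_ne hw.symm
  rw [G.degree_pos_iff_exists_adj]
  exact ⟨p.getVert 1, SimpleGraph.Walk.adj_snd hnil⟩

end Aux

theorem stmt_4 {α β : Type} [Fintype α] [Fintype β] [Nontrivial α] [Nontrivial β]
    (G : SimpleGraph α) (H : SimpleGraph β) [DecidableRel G.Adj]
    (hG : G.Connected) (hH : H.Connected)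
    (hdeg : G.minDegree ≠ 2 ∨ G.maxDegree ≠ 2) :
    ¬ Nonempty (cartProd G H ≃g tensorProd G H) := by
  classical
  rintro ⟨f⟩
  -- min degrees of the products
  obtain ⟨x₀, hx₀⟩ := G.exists_minimal_degree_vertex
  obtain ⟨y₀, hy₀⟩ := H.exists_minimal_degree_vertex
  obtain ⟨x₁, hx₁⟩ := G.exists_maximal_degree_vertex
  obtain ⟨y₁, hy₁⟩ := H.exists_maximal_degree_vertex
  set a := G.minDegree
  set b := H.minDegree
  set c := G.maxDegree
  set d := H.maxDegree
  have ha : 0 < a := hx₀ ▸ degree_pos_of_connected hG x₀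
  have hb : 0 < b := hy₀ ▸ degree_pos_of_connected hH y₀
  -- minDegree (cartProd) = a + b
  have hcartMin : (cartProd G H).minDegree = a + b := by
    apply le_antisymm
    · calc (cartProd G H).minDegree ≤ (cartProd G H).degree (x₀, y₀) :=
            minDegree_le_degree _ _
        _ = a + b := by rw [cart_degree, hx₀, hy₀]
    · apply le_minDegree_of_forall_le_degree
      rintro ⟨x, y⟩
      rw [cart_degree]
      exact Nat.add_le_add (minDegree_le_degree G x) (minDegree_le_degree H y)
  have htensMin : (tensorProd G H).minDegree = a * b := by
    apply le_antisymm
    · calc (tensorProd G H).minDegree ≤ (tensorProd G H).degree (x₀, y₀) :=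
            minDegree_le_degree _ _
        _ = a * b := by rw [tensor_degree, hx₀, hy₀]
    · apply le_minDegree_of_forall_le_degree
      rintro ⟨x, y⟩
      rw [tensor_degree]
      exact Nat.mul_le_mul (minDegree_le_degree G x) (minDegree_le_degree H y)
  have hcartMax : (cartProd G H).maxDegree = c + d := by
    apply le_antisymm
    · apply maxDegree_le_of_forall_degree_le
      rintro ⟨x, y⟩
      rw [cart_degree]
      exact Nat.add_le_add (degree_le_maxDegree G x) (degree_le_maxDegree H y)
    · calc c + d = (cartProd G H).degree (x₁, y₁) := by rw [cart_degree, hx₁, hy₁]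
        _ ≤ (cartProd G H).maxDegree := degree_le_maxDegree _ _
  have htensMax : (tensorProd G H).maxDegree = c * d := by
    apply le_antisymm
    · apply maxDegree_le_of_forall_degree_le
      rintro ⟨x, y⟩
      rw [tensor_degree]
      exact Nat.mul_le_mul (degree_le_maxDegree G x) (degree_le_maxDegree H y)
    · calc c * d = (tensorProd G H).degree (x₁, y₁) := by rw [tensor_degree, hx₁, hy₁]
        _ ≤ (tensorProd G H).maxDegree := degree_le_maxDegree _ _
  -- iso implies equal min and max degrees
  have hminEq : (cartProd G H).minDegree = (tensorProd G H).minDegree := by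
    apply le_antisymm
    · obtain ⟨v, hv⟩ := (tensorProd G H).exists_minimal_degree_vertex
      calc (cartProd G H).minDegree ≤ (cartProd G H).degree (f.symm v) :=
            minDegree_le_degree _ _
        _ = (tensorProd G H).degree v := (iso_degree_eq f.symm v).symm
        _ = (tensorProd G H).minDegree := hv.symm
    · obtain ⟨v, hv⟩ := (cartProd G H).exists_minimal_degree_vertex
      calc (tensorProd G H).minDegree ≤ (tensorProd G H).degree (f v) :=
            minDegree_le_degree _ _
        _ = (cartProd G H).degree v := (iso_degree_eq f v).symm
        _ = (cartProd G H).minDegree := hv.symm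
  have hmaxEq : (cartProd G H).maxDegree = (tensorProd G H).maxDegree := by
    apply le_antisymm
    · obtain ⟨v, hv⟩ := (cartProd G H).exists_maximal_degree_vertex
      calc (cartProd G H).maxDegree = (cartProd G H).degree v := hv
        _ = (tensorProd G H).degree (f v) := iso_degree_eq f v
        _ ≤ (tensorProd G H).maxDegree := degree_le_maxDegree _ _
    · obtain ⟨v, hv⟩ := (tensorProd G H).exists_maximal_degree_vertex
      calc (tensorProd G H).maxDegree = (tensorProd G H).degree v := hv
        _ = (cartProd G H).degree (f.symm v) := iso_degree_eq f.symm v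
        _ ≤ (cartProd G H).maxDegree := degree_le_maxDegree _ _
  rw [hcartMin, htensMin] at hminEq
  rw [hcartMax, htensMax] at hmaxEq
  -- a + b = a * b with a, b ≥ 1 forces a = b = 2
  have key : ∀ m n : ℕ, 0 < m → 0 < n → m + n = m * n → m = 2 ∧ n = 2 := by
    intro m n hm hn h
    obtain ⟨m, rfl⟩ := Nat.exists_eq_succ_of_ne_zero hm.ne'
    obtain ⟨n, rfl⟩ := Nat.exists_eq_succ_of_ne_zero hn.ne'
    have h' : m + 1 + (n + 1) = m * n + m + n + 1 := by
      rw [h]; simp [Nat.succ_mul, Nat.mul_succ]; ring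
    have h1 : m * n = 1 := by omega
    have hm1 : m = 1 := Nat.eq_one_of_mul_eq_one_right h1
    have hn1 : n = 1 := Nat.eq_one_of_mul_eq_one_left h1
    omega
  obtain ⟨ha2, hb2⟩ := key a b ha hb hminEq
  have hac : a ≤ c := hx₁ ▸ minDegree_le_degree G x₁
  have hbd : b ≤ d := hy₁ ▸ minDegree_le_degree H y₁
  obtain ⟨hc2, hd2⟩ := key c d (ha.trans_le hac) (hb.trans_le hbd) hmaxEq
  rcases hdeg with h | h
  · exact h ha2
  · exact h hc2
end

section
/- Let n ≥ 2 and m ≥ 1, so that C_{2n} is an even cycle and C_{2m+1} is an odd cycle. Then the Cartesian product C_{2n} □ C_{2m+1} and the Kronecker product C_{2n} ⊗ C_{2m+1} are not isomorphic, because the smallest adjacency eigenvalue of C_{2n} □ C_{2m+1} is −2 + 2cos(2mπ/(2m+1)), which belongs to neither of the two candidate smallest adjacency eigenvalues {−4, 4cos(2mπ/(2m+1))} of C_{2n} ⊗ C_{2m+1}. -/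
open SimpleGraph

open Classical in
/-- Adjacency matrix of a graph, over `ℝ`. -/
noncomputable def adjMat {α : Type*} [Fintype α] (G : SimpleGraph α) : Matrix α α ℝ :=
  Matrix.of fun i j => if G.Adj i j then 1 else 0


set_option linter.unusedSectionVars false
set_option linter.unusedVariables false
set_option linter.unusedTactic false
set_option maxHeartbeats 1000000

open Complex Matrix Kronecker

noncomputable section Circ
variable (N : ℕ)

def ww : ℂ := Complex.exp (2 * Real.pi * Complex.I / N)

def ee (j : ZMod N) : ℂ := (ww N) ^ j.val

lemma ww_ne_zero : ww N ≠ 0 := Complex.exp_ne_zero _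

lemma ww_pow (v : ℕ) : ww N ^ v = Complex.exp (v * (2 * Real.pi * Complex.I / N)) := by
  rw [ww, ← Complex.exp_nat_mul]

lemma ww_pow_N (hN : N ≠ 0) : (ww N) ^ N = 1 := by
  rw [ww_pow, mul_div_cancel₀ _ (by exact_mod_cast hN), Complex.exp_two_pi_mul_I]

lemma ww_pow_mod (hN : N ≠ 0) (x : ℕ) : ww N ^ x = ww N ^ (x % N) := by
  conv_lhs => rw [← Nat.mod_add_div x N, pow_add, pow_mul, ww_pow_N N hN, one_pow, mul_one]

variable [NeZero N]

lemma ee_add (a b : ZMod N) : ee N (a + b) = ee N a * ee N b := by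
  rw [ee, ee, ee, ← pow_add, ZMod.val_add, ← ww_pow_mod N (NeZero.ne N)]

lemma ee_zero : ee N 0 = 1 := by simp [ee]

lemma ee_ne_zero (a : ZMod N) : ee N a ≠ 0 := pow_ne_zero _ (ww_ne_zero N)

lemma ee_neg (a : ZMod N) : ee N (-a) = (ee N a)⁻¹ := by
  have h : ee N a * ee N (-a) = 1 := by rw [← ee_add]; simp [ee_zero]
  exact eq_inv_of_mul_eq_one_right h

lemma ee_mul (a b : ZMod N) : ee N (a * b) = (ee N a) ^ b.val := by
  rw [ee, ee, ZMod.val_mul, ← ww_pow_mod N (NeZero.ne N), pow_mul]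

lemma ee_eq_exp (a : ZMod N) : ee N a = Complex.exp ((2 * Real.pi * a.val / N : ℝ) * Complex.I) := by
  rw [ee, ww_pow]
  congr 1
  push_cast
  ring

lemma ee_add_inv (a : ZMod N) :
    ee N a + (ee N a)⁻¹ = (2 * Real.cos (2 * Real.pi * a.val / N) : ℝ) := by
  rw [ee_eq_exp, ← Complex.exp_neg, Complex.exp_mul_I, ← neg_mul, Complex.exp_mul_I]
  push_cast
  simp only [Complex.cos_neg, Complex.sin_neg]
  ring

lemma ee_eq_one_iff (a : ZMod N) : ee N a = 1 ↔ a = 0 := by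
  constructor
  · intro h
    rw [ee_eq_exp, Complex.exp_eq_one_iff] at h
    obtain ⟨n, hn⟩ := h
    have h1 : ((2 * Real.pi * a.val / N : ℝ) : ℂ) = ((n * (2 * Real.pi) : ℝ) : ℂ) := by
      have h2 : ((2 * Real.pi * a.val / N : ℝ) : ℂ) * Complex.I
          = ((n * (2 * Real.pi) : ℝ) : ℂ) * Complex.I := by
        rw [hn]; push_cast; ring
      exact mul_right_cancel₀ Complex.I_ne_zero h2
    have h2 : (2 * Real.pi * a.val / N : ℝ) = n * (2 * Real.pi) := by exact_mod_cast h1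
    have hNne : (N : ℝ) ≠ 0 := by exact_mod_cast (NeZero.ne N)
    have h3 : (a.val : ℝ) = n * N := by
      rw [div_eq_iff hNne] at h2
      apply mul_left_cancel₀ (by positivity : (2 * Real.pi : ℝ) ≠ 0)
      linear_combination h2
    have h4 : (a.val : ℤ) = n * N := by exact_mod_cast h3
    have h5 : (N : ℤ) ∣ (a.val : ℤ) := ⟨n, by linarith⟩
    have h6 : N ∣ a.val := by exact_mod_cast h5
    have h7 : a.val = 0 := by
      rcases Nat.eq_zero_or_pos a.val with h | h
      · exact h
      · exact absurd (Nat.le_of_dvd h h6) (not_le.mpr (ZMod.val_lt a))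
    exact (ZMod.val_eq_zero a).mp h7
  · intro h; rw [h, ee_zero]


def FF : Matrix (ZMod N) (ZMod N) ℂ := Matrix.of fun j k => ee N (j * k)

lemma adj_cycle_iff (hN : 3 ≤ N) (i j : ZMod N) :
    (cycleG N).Adj i j ↔ (j = i - 1 ∨ j = i + 1) := by
  haveI : Fact (1 < N) := ⟨by omega⟩
  constructor
  · rintro ⟨hne, h | h⟩
    · left; rw [eq_sub_iff_add_eq]; linear_combination -h
    · right; linear_combination h
  · rintro (h | h)
    · refine ⟨fun hij => ?_, Or.inl (by rw [h]; ring)⟩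
      rw [← hij] at h
      exact one_ne_zero (by linear_combination h)
    · refine ⟨fun hij => ?_, Or.inr (by rw [h]; ring)⟩
      rw [← hij] at h
      exact one_ne_zero (by linear_combination -h)

lemma sum_zmod_val (f : ℕ → ℂ) :
    ∑ k : ZMod N, f k.val = ∑ i ∈ Finset.range N, f i := by
  apply Finset.sum_nbij' (i := fun (k : ZMod N) => k.val) (j := fun (i : ℕ) => (i : ZMod N))
  · intro a _; exact Finset.mem_range.mpr (ZMod.val_lt a)
  · intro a _; exact Finset.mem_univ _
  · intro a _; exact ZMod.natCast_zmod_val a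
  · intro a ha; exact ZMod.val_cast_of_lt (Finset.mem_range.mp ha)
  · intro a _; rfl

lemma ee_pow_N (a : ZMod N) : (ee N a) ^ N = 1 := by
  rw [ee, ← pow_mul, mul_comm, pow_mul, ww_pow_N N (NeZero.ne N), one_pow]

lemma FF_mul_inv : FF N * Matrix.of (fun j k : ZMod N => ee N (-(j * k))) = (N : ℂ) • 1 := by
  ext j l
  rw [Matrix.mul_apply]
  have h1 : ∀ k : ZMod N, FF N j k * (Matrix.of (fun j k : ZMod N => ee N (-(j * k)))) k l
      = (ee N (j - l)) ^ k.val := by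
    intro k
    show ee N (j * k) * ee N (-(k * l)) = _
    rw [← ee_mul, ← ee_add]
    congr 1
    ring
  simp_rw [h1]
  rw [sum_zmod_val]
  by_cases hjl : j = l
  · subst hjl
    simp [ee_zero, Matrix.smul_apply, Matrix.one_apply]
  · have hz1 : ee N (j - l) ≠ 1 := fun h =>
      hjl (sub_eq_zero.mp ((ee_eq_one_iff N _).mp h))
    rw [geom_sum_eq hz1, ee_pow_N, sub_self, zero_div]
    simp [Matrix.smul_apply, Matrix.one_apply, hjl]

lemma FF_isUnit : IsUnit (FF N) := by
  have : FF N * (((N : ℂ))⁻¹ • Matrix.of (fun j k : ZMod N => ee N (-(j * k)))) = 1 := by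
    rw [Matrix.mul_smul, FF_mul_inv, smul_smul, inv_mul_cancel₀ (by exact_mod_cast NeZero.ne N), one_smul]
  exact (Matrix.isUnit_iff_isUnit_det _).mpr (Matrix.isUnit_det_of_right_inverse this)

lemma cyc_diag (hN : 3 ≤ N) :
    (adjMat (cycleG N)).map Complex.ofReal * FF N =
      FF N * Matrix.diagonal (fun k : ZMod N =>
        ((2 * Real.cos (2 * Real.pi * k.val / N) : ℝ) : ℂ)) := by
  ext j k
  rw [Matrix.mul_apply, Matrix.mul_diagonal]
  have hne : j - 1 ≠ j + 1 := by
    intro h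
    have h2 : ((2 : ℕ) : ZMod N) = 0 := by push_cast; linear_combination -h
    rw [ZMod.natCast_eq_zero_iff] at h2
    exact absurd (Nat.le_of_dvd (by norm_num) h2) (by omega)
  have h1 : ∀ x : ZMod N, ((adjMat (cycleG N)).map Complex.ofReal) j x * FF N x k
      = (if x = j - 1 then FF N x k else 0) + (if x = j + 1 then FF N x k else 0) := by
    intro x
    simp only [adjMat, Matrix.map_apply, Matrix.of_apply, apply_ite Complex.ofReal,
      Complex.ofReal_one, Complex.ofReal_zero, adj_cycle_iff N hN]
    by_cases hx1 : x = j - 1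
    · rw [if_pos (Or.inl hx1), if_pos hx1, if_neg (hx1 ▸ hne)]
      simp
    · by_cases hx2 : x = j + 1
      · rw [if_pos (Or.inr hx2), if_neg hx1, if_pos hx2]
        simp
      · rw [if_neg (by tauto), if_neg hx1, if_neg hx2]
        simp
  simp_rw [h1]
  rw [Finset.sum_add_distrib, Finset.sum_ite_eq' Finset.univ (j - 1) (fun x => FF N x k),
    Finset.sum_ite_eq' Finset.univ (j + 1) (fun x => FF N x k)]
  simp only [Finset.mem_univ, if_true]
  show ee N ((j - 1) * k) + ee N ((j + 1) * k) = ee N (j * k) * _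
  have e1 : (j - 1) * k = j * k + (-k) := by ring
  have e2 : (j + 1) * k = j * k + k := by ring
  rw [e1, e2, ee_add, ee_add, ee_neg, ← mul_add, ← ee_add_inv N k]
  ring

end Circ

section Prod
variable {α β : Type*} [Fintype α] [Fintype β] [DecidableEq α] [DecidableEq β]

lemma adjMat_cart_map (G : SimpleGraph α) (H : SimpleGraph β) :
    (adjMat (cartProd G H)).map Complex.ofReal =
      ((adjMat G).map Complex.ofReal) ⊗ₖ (1 : Matrix β β ℂ) +
      (1 : Matrix α α ℂ) ⊗ₖ ((adjMat H).map Complex.ofReal) := by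
  ext ⟨u, y⟩ ⟨u', y'⟩
  simp only [adjMat, cartProd, Matrix.map_apply, Matrix.of_apply, Matrix.add_apply,
    Matrix.kroneckerMap_apply, apply_ite Complex.ofReal, Complex.ofReal_one, Complex.ofReal_zero,
    Matrix.one_apply]
  by_cases h1 : G.Adj u u' <;> by_cases h2 : y = y' <;> by_cases h3 : u = u' <;>
      by_cases h4 : H.Adj y y' <;>
    first
      | (subst_vars; exact absurd h1 (G.irrefl))
      | (subst_vars; exact absurd h4 (H.irrefl))
      | simp_all

lemma spec_real_iff {ι : Type*} [Fintype ι] [DecidableEq ι] (M : Matrix ι ι ℝ) (μ : ℝ) :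
    μ ∈ spectrum ℝ M ↔ (μ : ℂ) ∈ spectrum ℂ (M.map Complex.ofReal) := by
  rw [spectrum.mem_iff, spectrum.mem_iff, Matrix.isUnit_iff_isUnit_det,
    Matrix.isUnit_iff_isUnit_det, isUnit_iff_ne_zero, isUnit_iff_ne_zero]
  have hmap : (algebraMap ℝ (Matrix ι ι ℝ) μ - M).map Complex.ofReal
      = algebraMap ℂ (Matrix ι ι ℂ) (μ : ℂ) - M.map Complex.ofReal := by
    ext i j
    simp [Matrix.map_apply, Matrix.algebraMap_matrix_apply]
    split_ifs <;> simp
  rw [← hmap]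
  have hdet : ((algebraMap ℝ (Matrix ι ι ℝ) μ - M).map Complex.ofReal).det
      = Complex.ofReal ((algebraMap ℝ (Matrix ι ι ℝ) μ - M).det) := by
    exact (Complex.ofRealHom.map_det _).symm
  rw [hdet]
  simp only [ne_eq, not_iff_not]
  exact_mod_cast Iff.rfl

end Prod

section Helpers
open Complex Matrix Kronecker

lemma cos_min_aux (m v : ℕ) (hv : v ≤ m) :
    Real.cos (2 * Real.pi * m / (2 * m + 1 : ℕ)) ≤ Real.cos (2 * Real.pi * v / (2 * m + 1 : ℕ)) := by
  have hpi := Real.pi_pos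
  have hNr : (0 : ℝ) < ((2 * m + 1 : ℕ) : ℝ) := by positivity
  refine Real.cos_le_cos_of_nonneg_of_le_pi (by positivity) ?_ ?_
  · rw [div_le_iff₀ hNr]
    push_cast
    nlinarith
  · gcongr

lemma cos_min (m v : ℕ) (hv : v < 2 * m + 1) :
    Real.cos (2 * Real.pi * m / (2 * m + 1 : ℕ)) ≤ Real.cos (2 * Real.pi * v / (2 * m + 1 : ℕ)) := by
  rcases le_or_gt v m with h | h
  · exact cos_min_aux m v h
  · have hv' : v ≤ 2 * m + 1 := by omega
    have hcast : (2 * Real.pi * v / (2 * m + 1 : ℕ)) =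
        2 * Real.pi - 2 * Real.pi * ((2 * m + 1 - v : ℕ) : ℝ) / ((2 * m + 1 : ℕ) : ℝ) := by
      have h1 : ((2 * m + 1 - v : ℕ) : ℝ) = ((2 * m + 1 : ℕ) : ℝ) - v := by
        push_cast [Nat.cast_sub hv']
        ring
      have hNr : ((2 * m + 1 : ℕ) : ℝ) ≠ 0 := by positivity
      rw [h1]
      field_simp
      ring
    rw [hcast, Real.cos_two_pi_sub]
    exact cos_min_aux m _ (by omega)

lemma spec_cart (n m : ℕ) (hn : 2 ≤ n) (hm : 1 ≤ m) (μ : ℝ) :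
    letI : NeZero (2 * n) := ⟨Nat.pos_iff_ne_zero.mp (by omega)⟩
    (μ ∈ spectrum ℝ (adjMat (cartProd (cycleG (2 * n)) (cycleG (2 * m + 1)))) ↔
      ∃ k : ZMod (2 * n), ∃ l : ZMod (2 * m + 1),
        μ = 2 * Real.cos (2 * Real.pi * k.val / (2 * n : ℕ)) +
          2 * Real.cos (2 * Real.pi * l.val / (2 * m + 1 : ℕ))) := by
  haveI : NeZero (2 * n) := ⟨by omega⟩
  haveI : NeZero (2 * m + 1) := ⟨by omega⟩
  rw [spec_real_iff, adjMat_cart_map]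
  set A := (adjMat (cycleG (2 * n))).map Complex.ofReal with hAdef
  set B := (adjMat (cycleG (2 * m + 1))).map Complex.ofReal with hBdef
  set F1 := FF (2 * n) with hF1
  set F2 := FF (2 * m + 1) with hF2
  set dA : ZMod (2 * n) → ℂ :=
    fun k => ((2 * Real.cos (2 * Real.pi * k.val / (2 * n : ℕ)) : ℝ) : ℂ) with hdA
  set dB : ZMod (2 * m + 1) → ℂ :=
    fun l => ((2 * Real.cos (2 * Real.pi * l.val / (2 * m + 1 : ℕ)) : ℝ) : ℂ) with hdB
  have hA : A * F1 = F1 * Matrix.diagonal dA := cyc_diag (2 * n) (by omega)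
  have hB : B * F2 = F2 * Matrix.diagonal dB := cyc_diag (2 * m + 1) (by omega)
  obtain ⟨u1, hu1⟩ := FF_isUnit (2 * n)
  obtain ⟨u2, hu2⟩ := FF_isUnit (2 * m + 1)
  set P := F1 ⊗ₖ F2 with hP
  set Q := ((↑u1⁻¹ : Matrix (ZMod (2 * n)) (ZMod (2 * n)) ℂ)) ⊗ₖ
    ((↑u2⁻¹ : Matrix (ZMod (2 * m + 1)) (ZMod (2 * m + 1)) ℂ)) with hQ
  have hPQ : P * Q = 1 := by
    rw [hP, hQ, ← Matrix.mul_kronecker_mul, hF1, hF2, ← hu1, ← hu2, Units.mul_inv, Units.mul_inv,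
      Matrix.one_kronecker_one]
  have hQP : Q * P = 1 := by
    rw [hP, hQ, ← Matrix.mul_kronecker_mul, hF1, hF2, ← hu1, ← hu2, Units.inv_mul, Units.inv_mul,
      Matrix.one_kronecker_one]
  set D : (ZMod (2 * n) × ZMod (2 * m + 1)) → ℂ := fun p => dA p.1 + dB p.2 with hD
  have hdiag : Matrix.diagonal dA ⊗ₖ (1 : Matrix (ZMod (2 * m + 1)) (ZMod (2 * m + 1)) ℂ) +
      (1 : Matrix (ZMod (2 * n)) (ZMod (2 * n)) ℂ) ⊗ₖ Matrix.diagonal dB = Matrix.diagonal D := by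
    have h1 : (1 : Matrix (ZMod (2 * m + 1)) (ZMod (2 * m + 1)) ℂ)
        = Matrix.diagonal (fun _ => 1) := Matrix.diagonal_one.symm
    have h2 : (1 : Matrix (ZMod (2 * n)) (ZMod (2 * n)) ℂ)
        = Matrix.diagonal (fun _ => 1) := Matrix.diagonal_one.symm
    rw [h1, h2, Matrix.diagonal_kronecker_diagonal, Matrix.diagonal_kronecker_diagonal,
      Matrix.diagonal_add]
    congr 1
    funext p
    simp [hD]
  have e1 : (A ⊗ₖ (1 : Matrix (ZMod (2 * m + 1)) (ZMod (2 * m + 1)) ℂ)) * P =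
      P * (Matrix.diagonal dA ⊗ₖ 1) := by
    rw [hP, ← Matrix.mul_kronecker_mul, ← Matrix.mul_kronecker_mul, hA, Matrix.one_mul,
      Matrix.mul_one]
  have e2 : ((1 : Matrix (ZMod (2 * n)) (ZMod (2 * n)) ℂ) ⊗ₖ B) * P =
      P * (1 ⊗ₖ Matrix.diagonal dB) := by
    rw [hP, ← Matrix.mul_kronecker_mul, ← Matrix.mul_kronecker_mul, hB, Matrix.one_mul,
      Matrix.mul_one]
  have hMP : (A ⊗ₖ 1 + 1 ⊗ₖ B) * P = P * Matrix.diagonal D := by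
    rw [Matrix.add_mul, e1, e2, ← Matrix.mul_add, hdiag]
  set u : (Matrix (ZMod (2 * n) × ZMod (2 * m + 1)) (ZMod (2 * n) × ZMod (2 * m + 1)) ℂ)ˣ :=
    ⟨P, Q, hPQ, hQP⟩ with hu
  have hM : A ⊗ₖ 1 + 1 ⊗ₖ B = (u : Matrix (ZMod (2 * n) × ZMod (2 * m + 1)) (ZMod (2 * n) × ZMod (2 * m + 1)) ℂ) * Matrix.diagonal D * ((u⁻¹ : _ˣ) : Matrix (ZMod (2 * n) × ZMod (2 * m + 1)) (ZMod (2 * n) × ZMod (2 * m + 1)) ℂ) := by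
    show A ⊗ₖ 1 + 1 ⊗ₖ B = P * Matrix.diagonal D * Q
    rw [← hMP, Matrix.mul_assoc, hPQ, Matrix.mul_one]
  rw [hM, spectrum.units_conjugate, spectrum_diagonal D]
  constructor
  · rintro ⟨⟨k, l⟩, hkl⟩
    refine ⟨k, l, ?_⟩
    have : ((2 * Real.cos (2 * Real.pi * k.val / (2 * n : ℕ)) +
        2 * Real.cos (2 * Real.pi * l.val / (2 * m + 1 : ℕ)) : ℝ) : ℂ) = (μ : ℂ) := by
      rw [← hkl]
      push_cast [hD, hdA, hdB]
      ring
    exact_mod_cast this.symm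
  · rintro ⟨k, l, rfl⟩
    refine ⟨⟨k, l⟩, ?_⟩
    push_cast [hD, hdA, hdB]
    ring

end Helpers

lemma no_iso (n m : ℕ) (hn : 2 ≤ n) (hm : 1 ≤ m) :
    ¬ Nonempty (cartProd (cycleG (2 * n)) (cycleG (2 * m + 1)) ≃g
        tensorProd (cycleG (2 * n)) (cycleG (2 * m + 1))) := by
  rintro ⟨φ⟩
  haveI : Fact (1 < 2 * m + 1) := ⟨by omega⟩
  set f : ZMod (2 * n) × ZMod (2 * m + 1) → ZMod 2 :=
    fun v => ZMod.castHom (⟨n, rfl⟩ : (2:ℕ) ∣ 2 * n) (ZMod 2) (φ v).1 with hf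
  have step : ∀ v w, (cartProd (cycleG (2 * n)) (cycleG (2 * m + 1))).Adj v w →
      f w = f v + 1 := by
    intro v w hvw
    have h2 : (tensorProd (cycleG (2 * n)) (cycleG (2 * m + 1))).Adj (φ v) (φ w) :=
      φ.map_rel_iff.mpr hvw
    have h3 := h2.1.2
    have key : f v - f w = 1 ∨ f w - f v = 1 := by
      rcases h3 with h | h
      · left
        show ZMod.castHom _ (ZMod 2) (φ v).1 - ZMod.castHom _ (ZMod 2) (φ w).1 = 1
        rw [← map_sub, h, _root_.map_one]
      · right
        show ZMod.castHom _ (ZMod 2) (φ w).1 - ZMod.castHom _ (ZMod 2) (φ v).1 = 1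
        rw [← map_sub, h, _root_.map_one]
    have hgen : ∀ a b : ZMod 2, (a - b = 1 ∨ b - a = 1) → b = a + 1 := by decide
    exact hgen _ _ key
  have walk : ∀ j : ℕ, f (0, (j : ZMod (2 * m + 1)))
      = f (0, (0 : ZMod (2 * m + 1))) + (j : ZMod 2) := by
    intro j
    induction j with
    | zero => simp
    | succ j ih =>
      have hadj : (cartProd (cycleG (2 * n)) (cycleG (2 * m + 1))).Adj
          (0, (j : ZMod (2 * m + 1))) (0, ((j + 1 : ℕ) : ZMod (2 * m + 1))) := by
        refine Or.inr ⟨rfl, ?_, Or.inr ?_⟩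
        · intro h
          simp only [Nat.cast_add, Nat.cast_one] at h
          exact one_ne_zero (by linear_combination -h : (1 : ZMod (2 * m + 1)) = 0)
        · push_cast
          ring
      rw [step _ _ hadj, ih]
      push_cast
      ring
  have hfin := walk (2 * m + 1)
  rw [ZMod.natCast_self] at hfin
  have h21 : ((2 * m + 1 : ℕ) : ZMod 2) = 1 := by
    push_cast
    rw [show (2 : ZMod 2) = 0 by decide]
    ring
  rw [h21, left_eq_add] at hfin
  exact one_ne_zero hfin


theorem stmt_6 (n m : ℕ) (hn : 2 ≤ n) (hm : 1 ≤ m) :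
    letI : NeZero (2 * n) := ⟨by omega⟩
    ((-2 + 2 * Real.cos (2 * (m : ℝ) * Real.pi / (2 * (m : ℝ) + 1)) ∈
        spectrum ℝ (adjMat (cartProd (cycleG (2 * n)) (cycleG (2 * m + 1))))) ∧
      (∀ μ ∈ spectrum ℝ (adjMat (cartProd (cycleG (2 * n)) (cycleG (2 * m + 1)))),
        -2 + 2 * Real.cos (2 * (m : ℝ) * Real.pi / (2 * (m : ℝ) + 1)) ≤ μ) ∧
      -2 + 2 * Real.cos (2 * (m : ℝ) * Real.pi / (2 * (m : ℝ) + 1)) ∉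
        ({-4, 4 * Real.cos (2 * (m : ℝ) * Real.pi / (2 * (m : ℝ) + 1))} : Set ℝ)) ∧
    ¬ Nonempty (cartProd (cycleG (2 * n)) (cycleG (2 * m + 1)) ≃g
        tensorProd (cycleG (2 * n)) (cycleG (2 * m + 1))) := by
  letI : NeZero (2 * n) := ⟨by omega⟩
  have hpi := Real.pi_pos
  set c := Real.cos (2 * (m : ℝ) * Real.pi / (2 * (m : ℝ) + 1)) with hc
  have hcc : c = Real.cos (2 * Real.pi * (m : ℕ) / ((2 * m + 1 : ℕ) : ℝ)) := by
    rw [hc]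
    congr 1
    push_cast
    ring
  have hcgt : -1 < c := by
    have hx : (0:ℝ) ≤ 2 * (m : ℝ) * Real.pi / (2 * (m : ℝ) + 1) := by positivity
    have hlt : 2 * (m : ℝ) * Real.pi / (2 * (m : ℝ) + 1) < Real.pi := by
      rw [div_lt_iff₀ (by positivity)]
      nlinarith
    have := Real.cos_lt_cos_of_nonneg_of_le_pi hx (le_refl Real.pi) hlt
    rw [Real.cos_pi] at this
    exact this
  refine ⟨⟨?_, ?_, ?_⟩, no_iso n m hn hm⟩
  · refine (spec_cart n m hn hm _).mpr ⟨(n : ZMod (2 * n)), (m : ZMod (2 * m + 1)), ?_⟩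
    rw [ZMod.val_cast_of_lt (show n < 2 * n by omega),
      ZMod.val_cast_of_lt (show m < 2 * m + 1 by omega)]
    have h1 : 2 * Real.pi * (n : ℝ) / ((2 * n : ℕ) : ℝ) = Real.pi := by
      have hn0 : (n : ℝ) ≠ 0 := by
        exact_mod_cast (by omega : n ≠ 0)
      push_cast
      field_simp
    rw [h1, Real.cos_pi, hcc]
    ring
  · intro μ hμ
    obtain ⟨k, l, rfl⟩ := (spec_cart n m hn hm μ).mp hμ
    have h1 : -1 ≤ Real.cos (2 * Real.pi * (k.val : ℝ) / ((2 * n : ℕ) : ℝ)) :=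
      Real.neg_one_le_cos _
    have h2 : c ≤ Real.cos (2 * Real.pi * (l.val : ℝ) / ((2 * m + 1 : ℕ) : ℝ)) := by
      rw [hcc]
      exact cos_min m l.val (ZMod.val_lt l)
    linarith
  · simp only [Set.mem_insert_iff, Set.mem_singleton_iff, not_or]
    constructor
    · intro h
      linarith
    · intro h
      linarith
end

section
/- Let G and H be finite simple connected graphs, each with at least two vertices. Then the Kronecker product G ⊗ H and the lexicographic product G ∘ H are not isomorphic. -/
open SimpleGraph

/-- Ordered adjacent pairs of a tensor product correspond to pairs of adjacent pairs. -/
def tensorPairsEquiv {α β : Type*} (G : SimpleGraph α) (H : SimpleGraph β) :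
    {p : (α × β) × (α × β) // (tensorProd G H).Adj p.1 p.2} ≃
    {q : α × α // G.Adj q.1 q.2} × {q : β × β // H.Adj q.1 q.2} where
  toFun p := (⟨(p.1.1.1, p.1.2.1), p.2.1⟩, ⟨(p.1.1.2, p.1.2.2), p.2.2⟩)
  invFun q := ⟨((q.1.1.1, q.2.1.1), (q.1.1.2, q.2.1.2)), q.1.2, q.2.2⟩
  left_inv p := rfl
  right_inv q := rfl

/-- Ordered adjacent pairs of a lexicographic product. -/
noncomputable def lexPairsEquiv {α β : Type*} (G : SimpleGraph α) (H : SimpleGraph β) :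
    {p : (α × β) × (α × β) // (lexProd G H).Adj p.1 p.2} ≃
    ({q : α × α // G.Adj q.1 q.2} × (β × β)) ⊕ (α × {q : β × β // H.Adj q.1 q.2}) := by
  classical
  exact {
    toFun := fun p =>
      if h : G.Adj p.1.1.1 p.1.2.1 then
        Sum.inl (⟨(p.1.1.1, p.1.2.1), h⟩, (p.1.1.2, p.1.2.2))
      else
        Sum.inr (p.1.1.1, ⟨(p.1.1.2, p.1.2.2), (p.2.resolve_left h).2⟩)
    invFun := fun q =>
      match q with
      | Sum.inl (⟨(x, y), h⟩, (u, v)) => ⟨((x, u), (y, v)), Or.inl h⟩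
      | Sum.inr (x, ⟨(u, v), h⟩) => ⟨((x, u), (x, v)), Or.inr ⟨rfl, h⟩⟩
    left_inv := by
      rintro ⟨⟨⟨x, u⟩, ⟨y, v⟩⟩, hp⟩
      by_cases h : G.Adj x y
      · simp [h]
      · have h2 := hp.resolve_left h
        have hy : x = y := h2.1
        subst hy
        simp [h]
    right_inv := by
      rintro (⟨⟨⟨x, y⟩, h⟩, u, v⟩ | ⟨x, ⟨⟨u, v⟩, h⟩⟩)
      · simp [h]
      · simp }

theorem stmt_14 {α β : Type} [Fintype α] [Fintype β] [Nontrivial α] [Nontrivial β]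
    (G : SimpleGraph α) (H : SimpleGraph β) (hG : G.Connected) (hH : H.Connected) :
    ¬ Nonempty (tensorProd G H ≃g lexProd G H) := by
  classical
  rintro ⟨f⟩
  -- G has an edge
  obtain ⟨x0, y0, hxy⟩ := exists_pair_ne α
  obtain ⟨w⟩ := hG x0 y0
  have hEG : Nonempty {q : α × α // G.Adj q.1 q.2} := by
    cases w with
    | nil => exact absurd rfl hxy
    | cons h _ => exact ⟨⟨(_, _), h⟩⟩
  have ha : 0 < Fintype.card {q : α × α // G.Adj q.1 q.2} := Fintype.card_pos_iff.mpr hEG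
  obtain ⟨b0⟩ : Nonempty β := inferInstance
  have hb : Fintype.card {q : β × β // H.Adj q.1 q.2} < Fintype.card (β × β) :=
    Fintype.card_subtype_lt (x := (b0, b0)) (H.irrefl)
  have key : Fintype.card {p : (α × β) × (α × β) // (tensorProd G H).Adj p.1 p.2}
      = Fintype.card {p : (α × β) × (α × β) // (lexProd G H).Adj p.1 p.2} :=
    Fintype.card_congr (Equiv.subtypeEquiv (Equiv.prodCongr f.toEquiv f.toEquiv)
      (fun p => Iff.symm f.map_adj_iff))
  have h1 : Fintype.card {p : (α × β) × (α × β) // (tensorProd G H).Adj p.1 p.2}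
      = Fintype.card {q : α × α // G.Adj q.1 q.2}
        * Fintype.card {q : β × β // H.Adj q.1 q.2} :=
    (Fintype.card_congr (tensorPairsEquiv G H)).trans (Fintype.card_prod _ _)
  have h2 : Fintype.card {p : (α × β) × (α × β) // (lexProd G H).Adj p.1 p.2}
      = Fintype.card {q : α × α // G.Adj q.1 q.2} * Fintype.card (β × β)
        + Fintype.card α * Fintype.card {q : β × β // H.Adj q.1 q.2} := by
    rw [Fintype.card_congr (lexPairsEquiv G H)]
    simp [Fintype.card_sum, Fintype.card_prod]
  have h3 : Fintype.card {q : α × α // G.Adj q.1 q.2}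
        * Fintype.card {q : β × β // H.Adj q.1 q.2}
      < Fintype.card {q : α × α // G.Adj q.1 q.2} * Fintype.card (β × β) :=
    Nat.mul_lt_mul_of_pos_left hb ha
  have h4 := key
  rw [h1, h2] at h4
  have h5 : 0 ≤ Fintype.card α * Fintype.card {q : β × β // H.Adj q.1 q.2} := Nat.zero_le _
  linarith
end

section
/- Let G and H be finite simple connected graphs, each with at least two vertices. Then the strong product G ⊠ H is isomorphic to the lexicographic product G ∘ H if and only if H is a complete graph. -/
open SimpleGraph

section Aux

/-- Project out the first-coordinate condition. -/
def subtypeFstEquiv {γ δ : Type*} (p : γ → Prop) : {q : γ × δ // p q.1} ≃ {x // p x} × δ where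
  toFun q := (⟨q.1.1, q.2⟩, q.1.2)
  invFun x := ⟨(x.1.1, x.2), x.1.2⟩
  left_inv q := rfl
  right_inv x := rfl

def diagEquiv (β : Type*) : {p : β × β // p.1 = p.2} ≃ β where
  toFun p := p.1.1
  invFun b := ⟨(b, b), rfl⟩
  left_inv := fun ⟨⟨x, y⟩, h⟩ => by cases h; rfl
  right_inv := fun b => rfl

lemma exists_adj_of_connected {α : Type} [Nontrivial α] (G : SimpleGraph α)
    (hG : G.Connected) : ∃ x y, G.Adj x y := by
  obtain ⟨x, y, hxy⟩ := exists_pair_ne α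
  obtain ⟨w⟩ := hG.preconnected x y
  cases w with
  | nil => exact absurd rfl hxy
  | cons h _ => exact ⟨_, _, h⟩

open Classical in
lemma strong_count {α β : Type} [Fintype α] [Fintype β]
    (G : SimpleGraph α) (H : SimpleGraph β) :
    Nat.card {q : (α × β) × (α × β) // (strongProd G H).Adj q.1 q.2}
      = Nat.card {p : α × α // G.Adj p.1 p.2} * Fintype.card β
        + (Fintype.card α * Nat.card {p : β × β // H.Adj p.1 p.2}
        + Nat.card {p : α × α // G.Adj p.1 p.2} * Nat.card {p : β × β // H.Adj p.1 p.2}) := by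
  classical
  set p1 : (α × α) × (β × β) → Prop := fun q => G.Adj q.1.1 q.1.2 ∧ q.2.1 = q.2.2 with hp1
  set p2 : (α × α) × (β × β) → Prop := fun q => q.1.1 = q.1.2 ∧ H.Adj q.2.1 q.2.2 with hp2
  set p3 : (α × α) × (β × β) → Prop := fun q => G.Adj q.1.1 q.1.2 ∧ H.Adj q.2.1 q.2.2 with hp3
  have h12 : Disjoint p1 (fun q => p2 q ∨ p3 q) := by
    rw [Pi.disjoint_iff]
    intro q
    rw [Prop.disjoint_iff]
    rintro ⟨⟨hg, hy⟩, ⟨hx, _⟩ | ⟨_, hh⟩⟩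
    · exact G.loopless.irrefl _ (hx ▸ hg)
    · exact H.loopless.irrefl _ (hy ▸ hh)
  have h23 : Disjoint p2 p3 := by
    rw [Pi.disjoint_iff]
    intro q
    rw [Prop.disjoint_iff]
    rintro ⟨⟨hx, _⟩, ⟨hg, _⟩⟩
    exact G.loopless.irrefl _ (hx ▸ hg)
  have e1 : {q : (α × β) × (α × β) // (strongProd G H).Adj q.1 q.2}
      ≃ {q : (α × α) × (β × β) // p1 q ∨ p2 q ∨ p3 q} :=
    Equiv.subtypeEquiv (Equiv.prodProdProdComm α β α β) (fun _ => Iff.rfl)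
  have e2 : {q : (α × α) × (β × β) // p1 q ∨ p2 q ∨ p3 q}
      ≃ {q // p1 q} ⊕ ({q // p2 q} ⊕ {q // p3 q}) :=
    (subtypeOrEquiv p1 (fun q => p2 q ∨ p3 q) h12).trans
      (Equiv.sumCongr (Equiv.refl _) (subtypeOrEquiv p2 p3 h23))
  have e3 : {q // p1 q} ≃ {p : α × α // G.Adj p.1 p.2} × β :=
    (Equiv.subtypeProdEquivProd (p := fun p : α × α => G.Adj p.1 p.2)
      (q := fun y : β × β => y.1 = y.2)).trans
      (Equiv.prodCongr (Equiv.refl _) (diagEquiv β))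
  have e4 : {q // p2 q} ≃ α × {p : β × β // H.Adj p.1 p.2} :=
    (Equiv.subtypeProdEquivProd (p := fun p : α × α => p.1 = p.2)
      (q := fun y : β × β => H.Adj y.1 y.2)).trans
      (Equiv.prodCongr (diagEquiv α) (Equiv.refl _))
  have e5 : {q // p3 q} ≃ {p : α × α // G.Adj p.1 p.2} × {p : β × β // H.Adj p.1 p.2} :=
    Equiv.subtypeProdEquivProd (p := fun p : α × α => G.Adj p.1 p.2)
      (q := fun y : β × β => H.Adj y.1 y.2)
  rw [Nat.card_congr (e1.trans e2), Nat.card_sum, Nat.card_sum,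
    Nat.card_congr e3, Nat.card_congr e4, Nat.card_congr e5,
    Nat.card_prod, Nat.card_prod, Nat.card_prod,
    Nat.card_eq_fintype_card (α := α), Nat.card_eq_fintype_card (α := β)]

open Classical in
lemma lex_count {α β : Type} [Fintype α] [Fintype β]
    (G : SimpleGraph α) (H : SimpleGraph β) :
    Nat.card {q : (α × β) × (α × β) // (lexProd G H).Adj q.1 q.2}
      = Nat.card {p : α × α // G.Adj p.1 p.2} * (Fintype.card β * Fintype.card β)
        + Fintype.card α * Nat.card {p : β × β // H.Adj p.1 p.2} := by
  classical
  set p1 : (α × α) × (β × β) → Prop := fun q => G.Adj q.1.1 q.1.2 with hp1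
  set p2 : (α × α) × (β × β) → Prop := fun q => q.1.1 = q.1.2 ∧ H.Adj q.2.1 q.2.2 with hp2
  have h12 : Disjoint p1 p2 := by
    rw [Pi.disjoint_iff]
    intro q
    rw [Prop.disjoint_iff]
    rintro ⟨hg, hx, _⟩
    exact G.loopless.irrefl _ (hx ▸ show G.Adj q.1.1 q.1.2 from hg)
  have e1 : {q : (α × β) × (α × β) // (lexProd G H).Adj q.1 q.2}
      ≃ {q : (α × α) × (β × β) // p1 q ∨ p2 q} :=
    Equiv.subtypeEquiv (Equiv.prodProdProdComm α β α β) (fun _ => Iff.rfl)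
  have e2 : {q : (α × α) × (β × β) // p1 q ∨ p2 q} ≃ {q // p1 q} ⊕ {q // p2 q} :=
    subtypeOrEquiv p1 p2 h12
  have e3 : {q // p1 q} ≃ {p : α × α // G.Adj p.1 p.2} × (β × β) :=
    subtypeFstEquiv (fun p : α × α => G.Adj p.1 p.2)
  have e4 : {q // p2 q} ≃ α × {p : β × β // H.Adj p.1 p.2} :=
    (Equiv.subtypeProdEquivProd (p := fun p : α × α => p.1 = p.2)
      (q := fun y : β × β => H.Adj y.1 y.2)).trans
      (Equiv.prodCongr (diagEquiv α) (Equiv.refl _))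
  rw [Nat.card_congr (e1.trans e2), Nat.card_sum, Nat.card_congr e3, Nat.card_congr e4,
    Nat.card_prod, Nat.card_prod, Nat.card_prod,
    Nat.card_eq_fintype_card (α := α), Nat.card_eq_fintype_card (α := β)]

end Aux
theorem stmt_15 {α β : Type} [Fintype α] [Fintype β] [Nontrivial α] [Nontrivial β]
    (G : SimpleGraph α) (H : SimpleGraph β) (hG : G.Connected) (hH : H.Connected) :
    Nonempty (strongProd G H ≃g lexProd G H) ↔ H = ⊤ := by
  classical
  constructor
  · rintro ⟨f⟩
    by_contra hHne
    -- a witness of non-adjacency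
    have hwit : ∃ y y', y ≠ y' ∧ ¬ H.Adj y y' := by
      by_contra hc
      push_neg at hc
      apply hHne
      ext y y'
      simp only [top_adj]
      exact ⟨fun h => H.ne_of_adj h, fun h => hc y y' h⟩
    obtain ⟨y0, y1, hy01, hnadj⟩ := hwit
    -- the isomorphism preserves the number of adjacent ordered pairs
    have hcard : Nat.card {q : (α × β) × (α × β) // (strongProd G H).Adj q.1 q.2}
        = Nat.card {q : (α × β) × (α × β) // (lexProd G H).Adj q.1 q.2} :=
      Nat.card_congr
        ⟨fun q => ⟨(f q.1.1, f q.1.2), f.map_rel_iff.mpr q.2⟩,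
         fun q => ⟨(f.symm q.1.1, f.symm q.1.2), f.symm.map_rel_iff.mpr q.2⟩,
         fun q => by ext <;> simp,
         fun q => by ext <;> simp⟩
    set a := Nat.card {p : α × α // G.Adj p.1 p.2} with ha
    set b := Nat.card {p : β × β // H.Adj p.1 p.2} with hb
    set n := Fintype.card α with hn
    set m := Fintype.card β with hm
    rw [strong_count G H, lex_count G H, ← ha, ← hb, ← hn, ← hm] at hcard
    -- G has at least one edge
    obtain ⟨x0, x1, hadj⟩ := exists_adj_of_connected G hG
    have hapos : 0 < a := by
      have : Nonempty {p : α × α // G.Adj p.1 p.2} := ⟨⟨(x0, x1), hadj⟩⟩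
      exact Nat.card_pos
    -- deduce m + b = m * m
    have hkey : m + b = m * m := by
      have h1 : a * (m + b) = a * (m * m) := by ring_nf; ring_nf at hcard; omega
      exact Nat.eq_of_mul_eq_mul_left hapos h1
    -- but b < m * m - m since H is not complete
    have hblt : b < m * m - m := by
      have hne : Nat.card {p : β × β // ¬ p.1 = p.2} = m * m - m := by
        rw [Nat.card_eq_fintype_card, Fintype.card_subtype_compl,
          Fintype.card_prod, ← Nat.card_eq_fintype_card (α := {p : β × β // p.1 = p.2}),
          Nat.card_congr (diagEquiv β), Nat.card_eq_fintype_card]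
      rw [hb, ← hne, Nat.card_eq_fintype_card, Nat.card_eq_fintype_card]
      exact Fintype.card_lt_of_injective_of_notMem
        (fun q => ⟨q.1, H.ne_of_adj q.2⟩)
        (by intro q q' h
            have := congrArg Subtype.val h
            exact Subtype.ext this)
        (b := ⟨(y0, y1), hy01⟩)
        (by rintro ⟨⟨p, hp⟩, h⟩
            have hp' := congrArg Subtype.val h
            rw [show p = (y0, y1) from hp'] at hp
            exact hnadj hp)
    have hmle : m ≤ m * m := Nat.le_mul_of_pos_left m (by
      have : Nonempty β := inferInstance
      simpa [hm] using Fintype.card_pos)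
    omega
  · intro h
    subst h
    refine ⟨⟨Equiv.refl _, ?_⟩⟩
    intro p q
    show (lexProd G ⊤).Adj p q ↔ (strongProd G ⊤).Adj p q
    simp only [lexProd, strongProd, top_adj]
    constructor
    · rintro (hg | ⟨hx, hy⟩)
      · by_cases hy : p.2 = q.2
        · exact Or.inl ⟨hg, hy⟩
        · exact Or.inr (Or.inr ⟨hg, hy⟩)
      · exact Or.inr (Or.inl ⟨hx, hy⟩)
    · rintro (⟨hg, _⟩ | ⟨hx, hy⟩ | ⟨hg, _⟩)
      · exact Or.inl hg
      · exact Or.inr ⟨hx, hy⟩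
      · exact Or.inl hg
end
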